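/- Let k ≥ 1 and t ≥ 2 be integers, let n ≥ max{12tk + 2k, 4tk^2}, and set N = 2n + t − 2. Suppose the edges of the complete graph K_N are colored red and blue so that there is no red copy of the star K_{1,n−1} and no blue copy of tF_k. Let A be the vertex set of a blue copy of (t−1)F_k and S = V(K_N) \ A. Let S_1 and S_2 be disjoint subsets of S, constructed as follows: Z_1, Z_2 are disjoint subsets of S such that for each i the blue graph inside Z_i has at most 3(k−1) non-isolated vertices and maximum degree at most 2(k−1) and n − 2kt + k + 1 ≤ |Z_i| ≤ n + k − 2; W = S \ (Z_1 ∪ Z_2); W_i = {w ∈ W : w has at most k − 1 blue neighbors in Z_i} for i = 1,2, where W_1 and W_2 partition W; and S_i = Z_i ∪ W_i. Then for each i ∈ {1,2} and each vertex v ∈ S_i, the number of blue neighbors of v in S_{3−i} is at least n − 4kt + 5. -/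

import Mathlib

open SimpleGraph

/-- `host.ContainsCopy G` means that `host` contains a (not necessarily induced) subgraph
isomorphic to `G`. -/
def SimpleGraph.ContainsCopy {β α : Type*} (host : SimpleGraph β) (G : SimpleGraph α) : Prop :=
  ∃ f : α → β, Function.Injective f ∧ ∀ ⦃a b : α⦄, G.Adj a b → host.Adj (f a) (f b)

/-- `ramseyProp G H N` means: for every red-blue coloring of the edges of the complete graph
on `N` vertices (given by its red graph `red`, the blue graph being the complement `redᶜ`),
there is a red copy of `G` or a blue copy of `H`. -/
def ramseyProp {α β : Type*} (G : SimpleGraph α) (H : SimpleGraph β) (N : ℕ) : Prop :=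
  ∀ red : SimpleGraph (Fin N), red.ContainsCopy G ∨ (redᶜ).ContainsCopy H

/-- The Ramsey number `r(G, H)`: the least `N` with the Ramsey property. -/
noncomputable def ramseyNumber {α β : Type*} (G : SimpleGraph α) (H : SimpleGraph β) : ℕ :=
  sInf {N | ramseyProp G H N}

/-- The fan `F_k = K_1 + k·K_2`: `k` triangles sharing exactly one common vertex (`none`). -/
def fan (k : ℕ) : SimpleGraph (Option (Fin k × Fin 2)) :=
  SimpleGraph.fromRel (fun x y => x = none ∨ ∃ i a b, x = some (i, a) ∧ y = some (i, b))

/-- `copies t G` is the disjoint union of `t` copies of `G`. -/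
def copies {α : Type*} (t : ℕ) (G : SimpleGraph α) : SimpleGraph (Fin t × α) where
  Adj x y := x.1 = y.1 ∧ G.Adj x.2 y.2
  symm := ⟨fun _ _ h => ⟨h.1.symm, h.2.symm⟩⟩
  loopless := ⟨fun x h => G.loopless.irrefl x.2 h.2⟩

/-- The blue graph inside `Z` (with blue graph `Rᶜ`) has at most `3(k−1)` non-isolated
vertices and maximum degree at most `2(k−1)`. -/
def blueAlmostIndependent {N : ℕ} (R : SimpleGraph (Fin N)) (k : ℕ) (Z : Set (Fin N)) : Prop :=
  ({v ∈ Z | ∃ w ∈ Z, (Rᶜ).Adj v w}).ncard ≤ 3 * (k - 1) ∧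
    ∀ v ∈ Z, (((Rᶜ).neighborSet v ∩ Z).ncard ≤ 2 * (k - 1))


lemma red_deg_le {N n : ℕ} {R : SimpleGraph (Fin N)}
    (hred : ¬ R.ContainsCopy (completeBipartiteGraph (Fin 1) (Fin (n - 1)))) (v : Fin N) :
    (R.neighborSet v).ncard ≤ n - 2 := by
  by_contra hcon
  push_neg at hcon
  have h1 : n - 1 ≤ (R.neighborSet v).ncard := by omega
  obtain ⟨s, hs, hscard⟩ := Set.exists_subset_card_eq h1
  have hcard : Nat.card s = n - 1 := by
    rw [Nat.card_coe_set_eq, hscard]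
  haveI : Finite s := Set.toFinite s
  let e : s ≃ Fin (n - 1) := Finite.equivFinOfCardEq hcard
  have hmem : ∀ j, R.Adj v ((e.symm j : Fin N)) := fun j => hs (e.symm j).2
  apply hred
  refine ⟨Sum.elim (fun _ => v) (fun j => (e.symm j : Fin N)), ?_, ?_⟩
  · intro a b hab
    match a, b with
    | Sum.inl i, Sum.inl i' => exact congrArg Sum.inl (Subsingleton.elim i i')
    | Sum.inl i, Sum.inr j => exact absurd hab (R.ne_of_adj (hmem j))
    | Sum.inr j, Sum.inl i => exact absurd hab.symm (R.ne_of_adj (hmem j))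
    | Sum.inr j, Sum.inr j' =>
        exact congrArg Sum.inr (e.symm.injective (Subtype.coe_injective hab))
  · intro a b hab
    match a, b with
    | Sum.inl i, Sum.inl i' => simp at hab
    | Sum.inr j, Sum.inr j' => simp at hab
    | Sum.inl i, Sum.inr j => exact hmem j
    | Sum.inr j, Sum.inl i => exact (hmem j).symm

lemma deg_split {N : ℕ} (R : SimpleGraph (Fin N)) (v : Fin N) :
    (R.neighborSet v).ncard + 1 + ((Rᶜ).neighborSet v).ncard = N := by
  have hcompl : (Rᶜ).neighborSet v = (insert v (R.neighborSet v))ᶜ := by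
    ext w
    simp only [SimpleGraph.mem_neighborSet, SimpleGraph.compl_adj, Set.mem_compl_iff,
      Set.mem_insert_iff, not_or]
    exact ⟨fun h => ⟨fun hw => h.1 hw.symm, h.2⟩, fun h => ⟨fun hw => h.1 hw.symm, h.2⟩⟩
  have hins : (insert v (R.neighborSet v)).ncard = (R.neighborSet v).ncard + 1 :=
    Set.ncard_insert_of_notMem (by simp)
  rw [hcompl, ← hins]
  have := Set.ncard_add_ncard_compl (insert v (R.neighborSet v))
  simpa using this

lemma count_aux {N : ℕ} (R : SimpleGraph (Fin N)) (k t n : ℕ) (hk : 1 ≤ k)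
    (A Z Wz S₂ W : Set (Fin N))
    (hdeg : ∀ v : Fin N, (n : ℤ) + t - 1 ≤ (((Rᶜ).neighborSet v).ncard : ℤ))
    (hAcard : (A.ncard : ℤ) ≤ 2*((k:ℤ)*t) + t - 2*k - 1)
    (hWcard : (W.ncard : ℤ) ≤ 2*((k:ℤ)*t) - 3)
    (hWzW : Wz ⊆ W)
    (hZmax : ∀ v ∈ Z, (((Rᶜ).neighborSet v ∩ Z).ncard ≤ 2 * (k-1)))
    (hWz : ∀ w ∈ Wz, ((Rᶜ).neighborSet w ∩ Z).ncard ≤ k - 1)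
    (hcover : Set.univ ⊆ A ∪ (Z ∪ Wz) ∪ S₂) :
    ∀ v ∈ Z ∪ Wz, (n:ℤ) - 4*(k:ℤ)*t + 5 ≤ (((Rᶜ).neighborSet v ∩ S₂).ncard : ℤ) := by
  intro v hv
  set B := (Rᶜ).neighborSet v with hB
  have hBsplit : B = ((B ∩ A) ∪ ((B ∩ Z) ∪ (B ∩ Wz))) ∪ (B ∩ S₂) := by
    rw [← Set.inter_union_distrib_left, ← Set.inter_union_distrib_left,
      ← Set.inter_union_distrib_left]
    exact (Set.inter_eq_left.mpr (fun x _ => hcover (Set.mem_univ x))).symm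
  have hle : B.ncard ≤ ((B ∩ A).ncard + ((B ∩ Z).ncard + (B ∩ Wz).ncard)) + (B ∩ S₂).ncard := by
    calc B.ncard = (((B ∩ A) ∪ ((B ∩ Z) ∪ (B ∩ Wz))) ∪ (B ∩ S₂)).ncard := by rw [← hBsplit]
    _ ≤ ((B ∩ A) ∪ ((B ∩ Z) ∪ (B ∩ Wz))).ncard + (B ∩ S₂).ncard := Set.ncard_union_le _ _
    _ ≤ ((B ∩ A).ncard + ((B ∩ Z) ∪ (B ∩ Wz)).ncard) + (B ∩ S₂).ncard := by
        gcongr; exact Set.ncard_union_le _ _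
    _ ≤ _ := by gcongr; exact Set.ncard_union_le _ _
  have hzn : (B ∩ Z).ncard ≤ 2 * (k - 1) := by
    rcases hv with hv | hv
    · exact hZmax v hv
    · exact le_trans (hWz v hv) (by omega)
  have hz : ((B ∩ Z).ncard : ℤ) ≤ 2*(k:ℤ) - 2 := by omega
  have hwz : ((B ∩ Wz).ncard : ℤ) ≤ (W.ncard : ℤ) := by
    exact_mod_cast Set.ncard_le_ncard (Set.inter_subset_right.trans hWzW)
  have ha : ((B ∩ A).ncard : ℤ) ≤ (A.ncard : ℤ) := by
    exact_mod_cast Set.ncard_le_ncard Set.inter_subset_right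
  have hle' : (B.ncard : ℤ) ≤
      (((B ∩ A).ncard : ℤ) + (((B ∩ Z).ncard : ℤ) + ((B ∩ Wz).ncard : ℤ)))
        + ((B ∩ S₂).ncard : ℤ) := by exact_mod_cast hle
  have := hdeg v
  rw [← hB] at this
  linarith

/-- Claim 4 in the proof of Theorem 6: with `Sᵢ = Zᵢ ∪ Wᵢ`, every vertex of `Sᵢ` has at
least `n − 4kt + 5` blue neighbors in `S_{3−i}`. -/
theorem S_blue_neighbors (k t n N : ℕ) (hk : 1 ≤ k) (ht : 2 ≤ t)
    (hn1 : 12 * t * k + 2 * k ≤ n) (hn2 : 4 * t * k ^ 2 ≤ n)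
    (hN : N = 2 * n + t - 2)
    (R : SimpleGraph (Fin N))
    (hred : ¬ R.ContainsCopy (completeBipartiteGraph (Fin 1) (Fin (n - 1))))
    (hblue : ¬ (Rᶜ).ContainsCopy (copies t (fan k)))
    (f : Fin (t - 1) × Option (Fin k × Fin 2) → Fin N)
    (hf_inj : Function.Injective f)
    (hf_adj : ∀ ⦃a b⦄, (copies (t - 1) (fan k)).Adj a b → (Rᶜ).Adj (f a) (f b))
    (A S : Set (Fin N)) (hA : A = Set.range f) (hS : S = Aᶜ)
    (Z₁ Z₂ : Set (Fin N)) (hZ₁S : Z₁ ⊆ S) (hZ₂S : Z₂ ⊆ S) (hZdisj : Disjoint Z₁ Z₂)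
    (hZ₁ : blueAlmostIndependent R k Z₁) (hZ₂ : blueAlmostIndependent R k Z₂)
    (hZ₁card : (n : ℤ) - 2 * (k : ℤ) * (t : ℤ) + (k : ℤ) + 1 ≤ (Z₁.ncard : ℤ) ∧
      (Z₁.ncard : ℤ) ≤ (n : ℤ) + (k : ℤ) - 2)
    (hZ₂card : (n : ℤ) - 2 * (k : ℤ) * (t : ℤ) + (k : ℤ) + 1 ≤ (Z₂.ncard : ℤ) ∧
      (Z₂.ncard : ℤ) ≤ (n : ℤ) + (k : ℤ) - 2)
    (W : Set (Fin N)) (hW : W = S \ (Z₁ ∪ Z₂))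
    (W₁ W₂ : Set (Fin N)) (hWunion : W₁ ∪ W₂ = W) (hWdisj : Disjoint W₁ W₂)
    (hW₁ : ∀ w ∈ W₁, ((Rᶜ).neighborSet w ∩ Z₁).ncard ≤ k - 1)
    (hW₂ : ∀ w ∈ W₂, ((Rᶜ).neighborSet w ∩ Z₂).ncard ≤ k - 1)
    (S₁ S₂ : Set (Fin N)) (hS₁ : S₁ = Z₁ ∪ W₁) (hS₂ : S₂ = Z₂ ∪ W₂) :
    (∀ v ∈ S₁, (n : ℤ) - 4 * (k : ℤ) * (t : ℤ) + 5 ≤ (((Rᶜ).neighborSet v ∩ S₂).ncard : ℤ)) ∧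
      (∀ v ∈ S₂,
        (n : ℤ) - 4 * (k : ℤ) * (t : ℤ) + 5 ≤ (((Rᶜ).neighborSet v ∩ S₁).ncard : ℤ)) := by

  -- basic numeric facts
  have h2k : 2 * k ≤ n := le_trans (Nat.le_add_left _ _) hn1
  have hn2' : 2 ≤ n := by omega
  have hred' : ∀ v, (R.neighborSet v).ncard ≤ n - 2 := fun v => red_deg_le hred v
  have hdeg : ∀ v : Fin N, (n : ℤ) + t - 1 ≤ (((Rᶜ).neighborSet v).ncard : ℤ) := by
    intro v
    have h1 := deg_split R v
    have h2 := hred' v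
    omega
  have hAn : A.ncard = (t - 1) * (2 * k + 1) := by
    rw [hA, ← Nat.card_coe_set_eq, Nat.card_range_of_injective hf_inj]
    rw [Nat.card_eq_fintype_card, Fintype.card_prod, Fintype.card_option, Fintype.card_prod,
      Fintype.card_fin, Fintype.card_fin, Fintype.card_fin]
    ring
  have hAZ : (A.ncard : ℤ) = 2*((k:ℤ)*t) + t - 2*k - 1 := by
    have h1 : 1 ≤ t := by omega
    rw [hAn, Nat.cast_mul, Nat.cast_sub h1]
    push_cast
    ring
  have hScard : A.ncard + S.ncard = N := by
    rw [hS]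
    have := Set.ncard_add_ncard_compl A
    simpa using this
  have hZsub : Z₁ ∪ Z₂ ⊆ S := Set.union_subset hZ₁S hZ₂S
  have hWeq : W.ncard + (Z₁.ncard + Z₂.ncard) = S.ncard := by
    rw [hW, ← Set.ncard_union_eq hZdisj]
    exact Set.ncard_diff_add_ncard_of_subset hZsub
  have hWcard : (W.ncard : ℤ) ≤ 2*((k:ℤ)*t) - 3 := by
    have e1 : (W.ncard : ℤ) + ((Z₁.ncard : ℤ) + (Z₂.ncard : ℤ)) = (S.ncard : ℤ) := by
      exact_mod_cast hWeq
    have e2 : (A.ncard : ℤ) + (S.ncard : ℤ) = (N : ℤ) := by exact_mod_cast hScard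
    have e3 : (N : ℤ) = 2*(n:ℤ) + t - 2 := by omega
    linarith [hZ₁card.1, hZ₂card.1]
  have hmemall : ∀ x : Fin N, x ∈ A ∨ (x ∈ Z₁ ∨ x ∈ W₁) ∨ (x ∈ Z₂ ∨ x ∈ W₂) := by
    intro x
    by_cases hxA : x ∈ A
    · exact Or.inl hxA
    have hxS : x ∈ S := by rw [hS]; exact hxA
    by_cases h1 : x ∈ Z₁
    · exact Or.inr (Or.inl (Or.inl h1))
    by_cases h2 : x ∈ Z₂
    · exact Or.inr (Or.inr (Or.inl h2))
    have hxW : x ∈ W := by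
      rw [hW]
      exact ⟨hxS, fun hmem => by rcases hmem with h | h; exacts [h1 h, h2 h]⟩
    have hx12 : x ∈ W₁ ∪ W₂ := by rw [hWunion]; exact hxW
    rcases hx12 with h | h
    · exact Or.inr (Or.inl (Or.inr h))
    · exact Or.inr (Or.inr (Or.inr h))
  have hcov1 : Set.univ ⊆ A ∪ (Z₁ ∪ W₁) ∪ S₂ := by
    intro x _
    have := hmemall x
    simp only [Set.mem_union, hS₂]
    tauto
  have hcov2 : Set.univ ⊆ A ∪ (Z₂ ∪ W₂) ∪ S₁ := by
    intro x _
    have := hmemall x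
    simp only [Set.mem_union, hS₁]
    tauto
  have hW₁W : W₁ ⊆ W := Set.Subset.trans Set.subset_union_left hWunion.subset
  have hW₂W : W₂ ⊆ W := Set.Subset.trans Set.subset_union_right hWunion.subset
  constructor
  · intro v hv
    have := count_aux R k t n hk A Z₁ W₁ S₂ W hdeg hAZ.le hWcard hW₁W hZ₁.2 hW₁ hcov1
    exact this v (hS₁ ▸ hv)
  · intro v hv
    have := count_aux R k t n hk A Z₂ W₂ S₁ W hdeg hAZ.le hWcard hW₂W hZ₂.2 hW₂ hcov2
    exact this v (hS₂ ▸ hv)
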